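/- Let N ≥ 2 and let 𝔸 be an N×N real matrix with 𝔸_{ij} ≤ 0 for all i ≠ j and zero row sums, ∑_{j=1}^N 𝔸_{ij} = 0 for all i. Let m_i > 0, let Δt > 0 satisfy Δt 𝔸_{ii} ≤ m_i for every i, and let r_{ij} (i ≠ j) be arbitrary real fluxes. Given u ∈ ℝ^N, define the low-order predictor ũ_i = u_i - (Δt/m_i)(𝔸u)_i and the flux-corrected update u^{new}_i = ũ_i + (Δt/m_i) ∑_{j≠i} α_{ij} r_{ij}, where the α_{ij} are produced by Zalesak's limiter applied with data (r_{ij}, m_i, Δt, ũ). Then the full explicit FCT step preserves the global bounds of u: min_{1≤j≤N} u_j ≤ u^{new}_i ≤ max_{1≤j≤N} u_j for every i. -/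

import Mathlib

noncomputable section

/-- For `N ≥ 2`, the set of indices different from `i` is nonempty. -/
lemma eraseUnivNonempty {N : ℕ} (hN : 2 ≤ N) (i : Fin N) :
    ((Finset.univ : Finset (Fin N)).erase i).Nonempty := by
  rw [← Finset.card_pos, Finset.card_erase_of_mem (Finset.mem_univ i), Finset.card_univ,
    Fintype.card_fin]
  omega

/-- For `N ≥ 1`, `Fin N` is nonempty as a finset. -/
lemma univNonempty {N : ℕ} (hN : 1 ≤ N) :
    (Finset.univ : Finset (Fin N)).Nonempty := by
  rw [← Finset.card_pos, Finset.card_univ, Fintype.card_fin]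
  omega

/-- `P_i^+ = ∑_{j ≠ i} max{r_{ij}, 0}`. -/
def Pp {N : ℕ} (r : Fin N → Fin N → ℝ) (i : Fin N) : ℝ :=
  ∑ j ∈ Finset.univ.erase i, max (r i j) 0

/-- `P_i^- = ∑_{j ≠ i} min{r_{ij}, 0}`. -/
def Pm {N : ℕ} (r : Fin N → Fin N → ℝ) (i : Fin N) : ℝ :=
  ∑ j ∈ Finset.univ.erase i, min (r i j) 0

/-- `Q_i^+ = max{0, max_{j ≠ i} (utilde_j - utilde_i)}`. -/
def Qp {N : ℕ} (hN : 2 ≤ N) (u : Fin N → ℝ) (i : Fin N) : ℝ :=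
  max 0 ((Finset.univ.erase i).sup' (eraseUnivNonempty hN i) fun j => u j - u i)

/-- `Q_i^- = min{0, min_{j ≠ i} (utilde_j - utilde_i)}`. -/
def Qm {N : ℕ} (hN : 2 ≤ N) (u : Fin N → ℝ) (i : Fin N) : ℝ :=
  min 0 ((Finset.univ.erase i).inf' (eraseUnivNonempty hN i) fun j => u j - u i)

/-- `R_i^+ = min{1, m_i Q_i^+ / (Δt P_i^+)}`, with `R_i^+ = 1` if `P_i^+ = 0`. -/
def Rp {N : ℕ} (hN : 2 ≤ N) (r : Fin N → Fin N → ℝ) (m : Fin N → ℝ) (Δt : ℝ)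
    (u : Fin N → ℝ) (i : Fin N) : ℝ :=
  if Pp r i = 0 then 1 else min 1 (m i * Qp hN u i / (Δt * Pp r i))

/-- `R_i^- = min{1, m_i Q_i^- / (Δt P_i^-)}`, with `R_i^- = 1` if `P_i^- = 0`. -/
def Rm {N : ℕ} (hN : 2 ≤ N) (r : Fin N → Fin N → ℝ) (m : Fin N → ℝ) (Δt : ℝ)
    (u : Fin N → ℝ) (i : Fin N) : ℝ :=
  if Pm r i = 0 then 1 else min 1 (m i * Qm hN u i / (Δt * Pm r i))

/-- Zalesak's correction factors. -/
def zalesakAlpha {N : ℕ} (hN : 2 ≤ N) (r : Fin N → Fin N → ℝ) (m : Fin N → ℝ)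
    (Δt : ℝ) (u : Fin N → ℝ) (i j : Fin N) : ℝ :=
  if 0 < r i j then min (Rp hN r m Δt u i) (Rm hN r m Δt u j)
  else min (Rm hN r m Δt u i) (Rp hN r m Δt u j)

section MyAux

variable {N : ℕ} (hN : 2 ≤ N) (r : Fin N → Fin N → ℝ) (m : Fin N → ℝ) (Δt : ℝ)
  (u : Fin N → ℝ)

lemma myPp_nonneg (i : Fin N) : 0 ≤ Pp r i :=
  Finset.sum_nonneg fun _ _ => le_max_right _ _

lemma myPm_nonpos (i : Fin N) : Pm r i ≤ 0 :=
  Finset.sum_nonpos fun _ _ => min_le_right _ _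

lemma myQp_nonneg (i : Fin N) : 0 ≤ Qp hN u i := le_max_left _ _

lemma myQm_nonpos (i : Fin N) : Qm hN u i ≤ 0 := min_le_left _ _

lemma myRp_nonneg (hm : ∀ i, 0 < m i) (hΔt : 0 < Δt) (i : Fin N) : 0 ≤ Rp hN r m Δt u i := by
  rw [Rp]
  split
  · norm_num
  · rename_i h
    have hPp : 0 < Pp r i := lt_of_le_of_ne (myPp_nonneg r i) (Ne.symm h)
    exact le_min zero_le_one
      (div_nonneg (mul_nonneg (hm i).le (myQp_nonneg hN u i)) (mul_nonneg hΔt.le hPp.le))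

lemma myRm_nonneg (hm : ∀ i, 0 < m i) (hΔt : 0 < Δt) (i : Fin N) : 0 ≤ Rm hN r m Δt u i := by
  rw [Rm]
  split
  · norm_num
  · rename_i h
    have hPm : Pm r i < 0 := lt_of_le_of_ne (myPm_nonpos r i) h
    refine le_min zero_le_one ?_
    rw [div_nonneg_iff]
    right
    constructor
    · exact mul_nonpos_of_nonneg_of_nonpos (hm i).le (myQm_nonpos hN u i)
    · exact (mul_neg_of_pos_of_neg hΔt hPm).le

lemma myAlpha_nonneg (hm : ∀ i, 0 < m i) (hΔt : 0 < Δt) (i j : Fin N) : 0 ≤ zalesakAlpha hN r m Δt u i j := by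
  rw [zalesakAlpha]
  split
  · exact le_min (myRp_nonneg hN r m Δt u hm hΔt i) (myRm_nonneg hN r m Δt u hm hΔt j)
  · exact le_min (myRm_nonneg hN r m Δt u hm hΔt i) (myRp_nonneg hN r m Δt u hm hΔt j)

/-- Upper bound on the limited antidiffusive sum. -/
lemma myCorr_le (hm : ∀ i, 0 < m i) (hΔt : 0 < Δt) (i : Fin N) :
    ∑ j ∈ Finset.univ.erase i, zalesakAlpha hN r m Δt u i j * r i j
      ≤ m i * Qp hN u i / Δt := by
  have step1 : ∑ j ∈ Finset.univ.erase i, zalesakAlpha hN r m Δt u i j * r i j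
      ≤ Rp hN r m Δt u i * Pp r i := by
    rw [Pp, Finset.mul_sum]
    refine Finset.sum_le_sum fun j _ => ?_
    rcases lt_or_ge 0 (r i j) with hrp | hrn
    · rw [max_eq_left hrp.le]
      refine mul_le_mul_of_nonneg_right ?_ hrp.le
      rw [zalesakAlpha, if_pos hrp]
      exact min_le_left _ _
    · rw [max_eq_right hrn]
      rw [mul_zero]
      exact mul_nonpos_of_nonneg_of_nonpos (myAlpha_nonneg hN r m Δt u hm hΔt i j) hrn
  refine step1.trans ?_
  rw [Rp]
  split
  · rename_i h
    rw [h, mul_zero]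
    exact div_nonneg (mul_nonneg (hm i).le (myQp_nonneg hN u i)) hΔt.le
  · rename_i h
    have hPp : 0 < Pp r i := lt_of_le_of_ne (myPp_nonneg r i) (Ne.symm h)
    have h2 : min 1 (m i * Qp hN u i / (Δt * Pp r i)) ≤ m i * Qp hN u i / (Δt * Pp r i) :=
      min_le_right _ _
    have h3 := mul_le_mul_of_nonneg_right h2 hPp.le
    refine h3.trans_eq ?_
    field_simp

/-- Lower bound on the limited antidiffusive sum. -/
lemma myCorr_ge (hm : ∀ i, 0 < m i) (hΔt : 0 < Δt) (i : Fin N) :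
    m i * Qm hN u i / Δt
      ≤ ∑ j ∈ Finset.univ.erase i, zalesakAlpha hN r m Δt u i j * r i j := by
  have step1 : Rm hN r m Δt u i * Pm r i
      ≤ ∑ j ∈ Finset.univ.erase i, zalesakAlpha hN r m Δt u i j * r i j := by
    rw [Pm, Finset.mul_sum]
    refine Finset.sum_le_sum fun j _ => ?_
    rcases lt_or_ge 0 (r i j) with hrp | hrn
    · rw [min_eq_right hrp.le, mul_zero]
      exact mul_nonneg (myAlpha_nonneg hN r m Δt u hm hΔt i j) hrp.le
    · rw [min_eq_left hrn]
      refine mul_le_mul_of_nonpos_right ?_ hrn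
      rw [zalesakAlpha, if_neg (not_lt.mpr hrn)]
      exact min_le_left _ _
  refine le_trans ?_ step1
  rw [Rm]
  split
  · rename_i h
    rw [h, mul_zero]
    exact div_nonpos_of_nonpos_of_nonneg
      (mul_nonpos_of_nonneg_of_nonpos (hm i).le (myQm_nonpos hN u i)) hΔt.le
  · rename_i h
    have hPm : Pm r i < 0 := lt_of_le_of_ne (myPm_nonpos r i) h
    have h2 : min 1 (m i * Qm hN u i / (Δt * Pm r i)) ≤ m i * Qm hN u i / (Δt * Pm r i) :=
      min_le_right _ _
    have h3 := mul_le_mul_of_nonpos_right h2 hPm.le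
    refine le_trans (le_of_eq ?_) h3
    field_simp

end MyAux

/-- The low-order predictor is a convex combination of the data. -/
lemma myPredictor_bounds
    {N : ℕ} (hN : 2 ≤ N) (A : Matrix (Fin N) (Fin N) ℝ)
    (hoff : ∀ i j, i ≠ j → A i j ≤ 0)
    (hrow : ∀ i, ∑ j, A i j = 0)
    (m : Fin N → ℝ) (hm : ∀ i, 0 < m i)
    (Δt : ℝ) (hΔt : 0 < Δt)
    (hcfl : ∀ i, Δt * A i i ≤ m i)
    (u utilde : Fin N → ℝ)
    (hutilde : ∀ i, utilde i = u i - Δt / m i * ∑ j, A i j * u j) (i : Fin N) :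
    Finset.univ.inf' (univNonempty (by linarith)) u ≤ utilde i ∧
      utilde i ≤ Finset.univ.sup' (univNonempty (by linarith)) u := by
  set c : Fin N → ℝ := fun j => (if j = i then (1:ℝ) else 0) - Δt / m i * A i j with hc
  have hrepr : utilde i = ∑ j, c j * u j := by
    rw [hutilde i, hc]
    simp only [sub_mul, ite_mul, one_mul, zero_mul, Finset.sum_sub_distrib,
      Finset.sum_ite_eq', Finset.mem_univ, if_true, Finset.mul_sum, mul_assoc]
  have hcnn : ∀ j, 0 ≤ c j := by
    intro j
    by_cases hji : j = i
    · subst hji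
      have hcj : c j = 1 - Δt / m j * A j j := by simp [hc]
      rw [hcj]
      have h1 : Δt / m j * A j j ≤ 1 := by
        rw [div_mul_eq_mul_div, div_le_one (hm j)]
        exact hcfl j
      linarith
    · simp only [hc, if_neg hji]
      have h1 : Δt / m i * A i j ≤ 0 :=
        mul_nonpos_of_nonneg_of_nonpos (div_pos hΔt (hm i)).le
          (hoff i j fun h => hji h.symm)
      linarith
  have hsum : ∑ j, c j = 1 := by
    rw [hc]
    rw [Finset.sum_sub_distrib, Finset.sum_ite_eq', if_pos (Finset.mem_univ i),
      ← Finset.mul_sum, hrow, mul_zero, sub_zero]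
  constructor
  · rw [hrepr]
    calc Finset.univ.inf' (univNonempty (by linarith)) u
        = ∑ j, c j * Finset.univ.inf' (univNonempty (by linarith : 1 ≤ N)) u := by
          rw [← Finset.sum_mul, hsum, one_mul]
      _ ≤ ∑ j, c j * u j :=
          Finset.sum_le_sum fun j _ => mul_le_mul_of_nonneg_left
            (Finset.inf'_le u (Finset.mem_univ j)) (hcnn j)
  · rw [hrepr]
    calc ∑ j, c j * u j
        ≤ ∑ j, c j * Finset.univ.sup' (univNonempty (by linarith : 1 ≤ N)) u :=
          Finset.sum_le_sum fun j _ => mul_le_mul_of_nonneg_left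
            (Finset.le_sup' u (Finset.mem_univ j)) (hcnn j)
      _ = Finset.univ.sup' (univNonempty (by linarith)) u := by
          rw [← Finset.sum_mul, hsum, one_mul]

/-- The full explicit FCT step (low-order predictor followed by Zalesak-limited
antidiffusive correction) preserves the global bounds of the data. -/
theorem explicit_fct_step_bound_preserving
    (N : ℕ) (hN : 2 ≤ N) (A : Matrix (Fin N) (Fin N) ℝ)
    (hoff : ∀ i j, i ≠ j → A i j ≤ 0)
    (hrow : ∀ i, ∑ j, A i j = 0)
    (m : Fin N → ℝ) (hm : ∀ i, 0 < m i)
    (Δt : ℝ) (hΔt : 0 < Δt)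
    (hcfl : ∀ i, Δt * A i i ≤ m i)
    (r : Fin N → Fin N → ℝ) (u utilde : Fin N → ℝ)
    (hutilde : ∀ i, utilde i = u i - Δt / m i * ∑ j, A i j * u j) :
    ∀ i,
      Finset.univ.inf' (univNonempty (by omega)) u ≤
        utilde i + Δt / m i * ∑ j ∈ Finset.univ.erase i, zalesakAlpha hN r m Δt utilde i j * r i j ∧
      utilde i + Δt / m i * ∑ j ∈ Finset.univ.erase i, zalesakAlpha hN r m Δt utilde i j * r i j ≤
        Finset.univ.sup' (univNonempty (by omega)) u := by
  intro i
  have hpred := fun j => myPredictor_bounds hN A hoff hrow m hm Δt hΔt hcfl u utilde hutilde j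
  have hmne : m i ≠ 0 := (hm i).ne'
  have hΔtne : Δt ≠ 0 := hΔt.ne'
  have hpos : 0 < Δt / m i := div_pos hΔt (hm i)
  constructor
  · -- lower bound
    have h1 : m i * Qm hN utilde i / Δt
        ≤ ∑ j ∈ Finset.univ.erase i, zalesakAlpha hN r m Δt utilde i j * r i j :=
      myCorr_ge hN r m Δt utilde hm hΔt i
    have h2 := mul_le_mul_of_nonneg_left h1 hpos.le
    have h3 : Δt / m i * (m i * Qm hN utilde i / Δt) = Qm hN utilde i := by
      field_simp
    rw [h3] at h2
    have h4 : Finset.univ.inf' (univNonempty (by omega : 1 ≤ N)) u ≤ utilde i + Qm hN utilde i := by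
      obtain ⟨j, hj, hje⟩ := Finset.exists_mem_eq_inf' (eraseUnivNonempty hN i)
        (fun j => utilde j - utilde i)
      rw [Qm, hje]
      have hmin : Finset.univ.inf' (univNonempty (by omega : 1 ≤ N)) u
          ≤ min (utilde i) (utilde j) :=
        le_min (hpred i).1 (hpred j).1
      rcases le_total (utilde j - utilde i) 0 with h | h
      · rw [min_eq_right h]
        have := min_le_right (utilde i) (utilde j)
        linarith
      · rw [min_eq_left h]
        have := min_le_left (utilde i) (utilde j)
        linarith
    linarith
  · -- upper bound
    have h1 : ∑ j ∈ Finset.univ.erase i, zalesakAlpha hN r m Δt utilde i j * r i j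
        ≤ m i * Qp hN utilde i / Δt :=
      myCorr_le hN r m Δt utilde hm hΔt i
    have h2 := mul_le_mul_of_nonneg_left h1 hpos.le
    have h3 : Δt / m i * (m i * Qp hN utilde i / Δt) = Qp hN utilde i := by
      field_simp
    rw [h3] at h2
    have h4 : utilde i + Qp hN utilde i ≤ Finset.univ.sup' (univNonempty (by omega : 1 ≤ N)) u := by
      obtain ⟨j, hj, hje⟩ := Finset.exists_mem_eq_sup' (eraseUnivNonempty hN i)
        (fun j => utilde j - utilde i)
      rw [Qp, hje]
      have hmax : max (utilde i) (utilde j)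
          ≤ Finset.univ.sup' (univNonempty (by omega : 1 ≤ N)) u :=
        max_le (hpred i).2 (hpred j).2
      rcases le_total (utilde j - utilde i) 0 with h | h
      · rw [max_eq_left h]
        have := le_max_left (utilde i) (utilde j)
        linarith
      · rw [max_eq_right h]
        have := le_max_right (utilde i) (utilde j)
        linarith
    linarith
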